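/- Let J ≥ 2 be an integer and let q be a probability mass function (PMF) on Fin J → Fin J such that every d in the support of q has a default choice. Then for every σ : Fin J → Fin J with σ j ≠ j for all j, one has ∑_{j ∈ Fin J} q({d : Fin J → Fin J | d (σ j) = j}) ≤ 1. -/

import Mathlib

/-- Theorem 1 of the paper in the case J₀ = 0, at the level of the
distribution of potential treatments. -/
theorem stmt_4 (J : ℕ) (hJ : 2 ≤ J) (q : PMF (Fin J → Fin J))
    (hq : ∀ d ∈ q.support, ∃ jstar : Fin J, ∀ j, d j = j ∨ d j = jstar)
    (σ : Fin J → Fin J) (hσ : ∀ j, σ j ≠ j) :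
    ∑ j : Fin J, q.toOuterMeasure {d : Fin J → Fin J | d (σ j) = j} ≤ 1 := by
  have key : ∀ d : Fin J → Fin J,
      ∑ j : Fin J, Set.indicator {d : Fin J → Fin J | d (σ j) = j} q d ≤ q d := by
    intro d
    by_cases hd : q d = 0
    · calc ∑ j : Fin J, Set.indicator {d : Fin J → Fin J | d (σ j) = j} q d
          ≤ ∑ j : Fin J, (0 : ENNReal) := by
            refine Finset.sum_le_sum fun j _ => ?_
            by_cases h : d ∈ {d : Fin J → Fin J | d (σ j) = j}
            · rw [Set.indicator_of_mem h, hd]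
            · rw [Set.indicator_of_notMem h]
        _ = 0 := by simp
        _ ≤ q d := zero_le
    · obtain ⟨jstar, hjs⟩ := hq d hd
      have : ∑ j : Fin J, Set.indicator {d : Fin J → Fin J | d (σ j) = j} q d
          = ∑ j ∈ Finset.univ.filter (fun j => d (σ j) = j), q d := by
        rw [Finset.sum_filter]
        refine Finset.sum_congr rfl fun j _ => ?_
        simp [Set.indicator_apply, Set.mem_setOf_eq]
      rw [this]
      have hsub : Finset.univ.filter (fun j => d (σ j) = j) ⊆ {jstar} := by
        intro j hj
        simp only [Finset.mem_filter] at hj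
        have := hjs (σ j)
        rcases this with h | h
        · exact absurd (h.symm.trans hj.2) (hσ j)
        · simp [Finset.mem_singleton, hj.2.symm.trans h]
      calc ∑ j ∈ Finset.univ.filter (fun j => d (σ j) = j), q d
          ≤ ∑ j ∈ {jstar}, q d := Finset.sum_le_sum_of_subset hsub
        _ = q d := by simp
  calc ∑ j : Fin J, q.toOuterMeasure {d : Fin J → Fin J | d (σ j) = j}
      = ∑ j : Fin J, ∑ d, Set.indicator {d : Fin J → Fin J | d (σ j) = j} q d := by
        simp [PMF.toOuterMeasure_apply, tsum_fintype]
    _ = ∑ d, ∑ j : Fin J, Set.indicator {d : Fin J → Fin J | d (σ j) = j} q d :=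
        Finset.sum_comm
    _ ≤ ∑ d, q d := Finset.sum_le_sum fun d _ => key d
    _ = 1 := by rw [← tsum_fintype (L := .unconditional _)]; exact q.tsum_coe
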